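/- Let (Ω, Σ, μ, P, t) be an epistemic model in which each t(ω,·) is monotonic (E ⊆ F measurable implies t(ω,E) ≤ t(ω,F)) and [t(ω)] is measurable for every ω, and which satisfies Certainty of Beliefs: t(ω, [t(ω)]) = 1 for every ω. Then for every p ∈ [0,1] and every measurable E: (i) B^p(E) ⊆ B^1(B^p(E)), and (ii) Ω ∖ B^p(E) ⊆ B^1(Ω ∖ B^p(E)). -/
import Mathlib


open MeasureTheory

/-- An epistemic model over a measurable space `Ω` with prior `μ`. -/
structure EpiModel (Ω : Type) [MeasurableSpace Ω] (μ : Measure Ω) where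
  P : Ω → Set Ω
  t : Ω → Set Ω → ℝ
  prob : IsProbabilityMeasure μ
  P_meas : ∀ ω, MeasurableSet (P ω)
  K_meas : ∀ E : Set Ω, MeasurableSet E → MeasurableSet {ω | P ω ⊆ E}
  t_nonneg : ∀ ω E, 0 ≤ t ω E
  t_le_one : ∀ ω E, t ω E ≤ 1
  t_meas : ∀ E : Set Ω, MeasurableSet E → Measurable fun ω => t ω E
  P_pos : ∀ ω, 0 < μ (P ω)

namespace EpiModel

variable {Ω : Type} [MeasurableSpace Ω] {μ : Measure Ω}

/-- The `p`-belief operator `B^p`. -/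
def B (M : EpiModel Ω μ) (p : ℝ) (E : Set Ω) : Set Ω := {ω | p ≤ M.t ω E}

/-- The qualitative belief operator `K`. -/
def K (M : EpiModel Ω μ) (A : Set Ω) : Set Ω := {ω | M.P ω ⊆ A}

/-- `(↑t(ω))`. -/
def up (M : EpiModel Ω μ) (ω : Ω) : Set Ω :=
  {ω' | ∀ E : Set Ω, MeasurableSet E → M.t ω E ≤ M.t ω' E}

/-- `(↓t(ω))`. -/
def down (M : EpiModel Ω μ) (ω : Ω) : Set Ω :=
  {ω' | ∀ E : Set Ω, MeasurableSet E → M.t ω' E ≤ M.t ω E}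

/-- `[t(ω)] = (↑t(ω)) ∩ (↓t(ω))`. -/
def cl (M : EpiModel Ω μ) (ω : Ω) : Set Ω := M.up ω ∩ M.down ω

/-- Invariance: the prior is the expectation of the posteriors. -/
def Invariance (M : EpiModel Ω μ) : Prop :=
  ∀ E : Set Ω, MeasurableSet E → (μ E).toReal = ∫ ω, M.t ω E ∂μ

/-- Entailment: `t(ω, P(ω)) = 1`. -/
def Entailment (M : EpiModel Ω μ) : Prop := ∀ ω, M.t ω (M.P ω) = 1

/-- Self-Evidence of Beliefs: `P(ω) ⊆ (↑t(ω))`. -/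
def SelfEvidence (M : EpiModel Ω μ) : Prop := ∀ ω, M.P ω ⊆ M.up ω

/-- Each `t(ω,·)` is the restriction of a countably additive probability measure. -/
def AdditiveTypes (M : EpiModel Ω μ) : Prop :=
  ∀ ω, ∃ ν : Measure Ω, IsProbabilityMeasure ν ∧
    ∀ E : Set Ω, MeasurableSet E → M.t ω E = (ν E).toReal

/-- A regular model. -/
def Regular (M : EpiModel Ω μ) : Prop :=
  M.AdditiveTypes ∧ M.Invariance ∧ M.Entailment ∧ M.SelfEvidence

/-- Each type is the Bayes conditional probability given the information set. -/
def Bayes (M : EpiModel Ω μ) : Prop :=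
  ∀ (ω : Ω) (E : Set Ω), MeasurableSet E →
    M.t ω E = (μ (E ∩ M.P ω)).toReal / (μ (M.P ω)).toReal

/-- A discrete environment: countable states, powerset σ-algebra, full-support prior. -/
def Discrete (Ω : Type) [MeasurableSpace Ω] (μ : Measure Ω) : Prop :=
  Countable Ω ∧ (∀ A : Set Ω, MeasurableSet A) ∧ ∀ ω : Ω, 0 < μ {ω}

/-- `{P(ω)}` forms a partition. -/
def Partitional (M : EpiModel Ω μ) : Prop :=
  (∀ ω, ω ∈ M.P ω) ∧ ∀ ω ω', ω' ∈ M.P ω → M.P ω' = M.P ω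

end EpiModel

/-- Certainty of Beliefs implies both positive and negative
introspection of `p`-beliefs. -/
theorem statement19 {Ω : Type} [MeasurableSpace Ω] {μ : MeasureTheory.Measure Ω}
    (M : EpiModel Ω μ)
    (hmono : ∀ (ω : Ω) (E F : Set Ω), MeasurableSet E → MeasurableSet F → E ⊆ F →
      M.t ω E ≤ M.t ω F)
    (hcl : ∀ ω, MeasurableSet (M.cl ω))
    (hcert : ∀ ω, M.t ω (M.cl ω) = 1) :
    ∀ p ∈ Set.Icc (0 : ℝ) 1, ∀ E : Set Ω, MeasurableSet E →
      M.B p E ⊆ M.B 1 (M.B p E) ∧ (M.B p E)ᶜ ⊆ M.B 1 ((M.B p E)ᶜ) := by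
  intro p hp E hE
  have hBmeas : MeasurableSet (M.B p E) := measurableSet_le measurable_const (M.t_meas E hE)
  constructor
  · intro ω hω
    have hsub : M.cl ω ⊆ M.B p E := by
      intro ω' hω'
      have h1 := hω'.1 E hE
      exact le_trans hω h1
    have := hmono ω (M.cl ω) (M.B p E) (hcl ω) hBmeas hsub
    rw [hcert ω] at this
    exact this
  · intro ω hω
    have hsub : M.cl ω ⊆ (M.B p E)ᶜ := by
      intro ω' hω' hmem
      exact hω (le_trans hmem (hω'.2 E hE))
    have := hmono ω (M.cl ω) ((M.B p E)ᶜ) (hcl ω) hBmeas.compl hsub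
    rw [hcert ω] at this
    exact this
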